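/- Let (W, S) be a Coxeter system with S finite, and suppose W is generated by a set {s_i : i ∈ Ĩ} of reflections such that for every proper subset J ⊊ Ĩ the subgroup W_J generated by {s_i : i ∈ J} together with {s_i : i ∈ J} is a Coxeter system (as in the affine Weyl group setting, where Ĩ indexes the simple affine reflections acting on the finite Weyl group). If J, J' ⊊ Ĩ are proper subsets with W_J = W_{J'} ≠ W, then J = J'. -/

import Mathlib

namespace Stmt19Aux
open List CoxeterSystem
attribute [local instance] Classical.propDecidable

variable {B : Type*} {W : Type*} [Group W] {M : CoxeterMatrix B} (cs : CoxeterSystem M W)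
local prefix:100 "s" => cs.simple
local prefix:100 "π" => cs.wordProd

noncomputable def eta (i : B) : Equiv.Perm (W × ZMod 2) :=
  Function.Involutive.toPerm
    (fun x => (s i * x.1 * s i, x.2 + if x.1 = s i then 1 else 0))
    (fun x => by
      have hss := cs.simple_mul_simple_self i
      have h1 : s i * (s i * x.1 * s i) * s i = x.1 := by
        calc s i * (s i * x.1 * s i) * s i = (s i * s i) * x.1 * (s i * s i) := by group
        _ = x.1 := by rw [hss]; group
      have h2 : (s i * x.1 * s i = s i) ↔ (x.1 = s i) := by
        constructor
        · intro h
          calc x.1 = (s i * s i) * x.1 * (s i * s i) := by rw [hss]; group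
          _ = s i * (s i * x.1 * s i) * s i := by group
          _ = s i * s i * s i := by rw [h]
          _ = s i := by rw [hss]; group
        · intro h; rw [h, hss, one_mul]
      have h3 : ∀ c : ZMod 2, c + c = 0 := by decide
      ext
      · exact h1
      · simp only [h2]
        by_cases hx : x.1 = s i <;> simp [hx, add_assoc, h3])

lemma eta_apply (i : B) (x : W × ZMod 2) :
    eta cs i x = (s i * x.1 * s i, x.2 + if x.1 = s i then 1 else 0) := rfl

lemma sum_pair {A : Type*} [AddCommMonoid A] (f : ℕ → A) (m : ℕ) :
    ∑ k ∈ Finset.range m, (f (2*k) + f (2*k+1)) = ∑ j ∈ Finset.range (2*m), f j := by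
  induction m with
  | zero => simp
  | succ m ih =>
    rw [Finset.sum_range_succ, ih, mul_add, mul_one]
    rw [show 2*m+2 = (2*m+1)+1 from rfl, Finset.sum_range_succ, Finset.sum_range_succ]
    abel

lemma eta_braid (i i' : B) (n : ℕ) (x : W × ZMod 2) :
    ((eta cs i * eta cs i') ^ n) x =
      ((s i * s i')^n * x.1 * ((s i * s i')^n)⁻¹,
        x.2 + ∑ k ∈ Finset.range n,
          ((if x.1 = s i' * (s i * s i')^(2*k) then 1 else 0) +
           (if x.1 = s i' * (s i * s i')^(2*k+1) then (1 : ZMod 2) else 0))) := by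
  set p := s i * s i' with hp
  have hpinv : p⁻¹ = s i' * s i := by
    rw [hp, mul_inv_rev, cs.inv_simple, cs.inv_simple]
  induction n generalizing x with
  | zero => simp
  | succ n ih =>
    rw [pow_succ, Equiv.Perm.mul_apply]
    -- compute (eta i * eta i') x
    have hq : (eta cs i * eta cs i') x =
        (p * x.1 * p⁻¹, x.2 + ((if x.1 = s i' * p^(2*0) then 1 else 0) +
          (if x.1 = s i' * p^(2*0+1) then (1 : ZMod 2) else 0))) := by
      rw [Equiv.Perm.mul_apply, eta_apply, eta_apply]
      have hc1 : s i * (s i' * x.1 * s i') * s i = p * x.1 * p⁻¹ := by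
        rw [hpinv, hp]; group
      have hc2 : (s i' * x.1 * s i' = s i) ↔ (x.1 = s i' * p^(2*0+1)) := by
        rw [pow_one, hp]
        constructor
        · intro h
          calc x.1 = (s i' * s i') * x.1 * (s i' * s i') := by
                rw [cs.simple_mul_simple_self]; group
          _ = s i' * (s i' * x.1 * s i') * s i' := by group
          _ = s i' * s i * s i' := by rw [h]
          _ = s i' * (s i * s i') := by group
        · intro h
          rw [h]
          calc s i' * (s i' * (s i * s i')) * s i' = (s i' * s i') * s i * (s i' * s i') := by
                group
          _ = s i := by rw [cs.simple_mul_simple_self]; group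
      have hc0 : (x.1 = s i') ↔ (x.1 = s i' * p^(2*0)) := by norm_num
      simp only [hc1]
      ext
      · rfl
      · simp only []
        rw [show (if s i' * x.1 * s i' = s i then (1:ZMod 2) else 0)
              = (if x.1 = s i' * p^(2*0+1) then 1 else 0) from if_congr hc2 rfl rfl,
            show (if x.1 = s i' then (1:ZMod 2) else 0)
              = (if x.1 = s i' * p^(2*0) then 1 else 0) from if_congr hc0 rfl rfl]
        ring
    rw [hq, ih]
    have hps : p⁻¹ * s i' = s i' * p := by
      rw [hpinv, hp]; group
    have hcond : ∀ c : ℕ, (p * x.1 * p⁻¹ = s i' * p^c) ↔ (x.1 = s i' * p^(c+2)) := by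
      intro c
      have key : p⁻¹ * (s i' * p^c) * p = s i' * p^(c+2) := by
        calc p⁻¹ * (s i' * p^c) * p = (p⁻¹ * s i') * p^c * p := by group
        _ = (s i' * p) * p^c * p := by rw [hps]
        _ = s i' * (p * p^c * p) := by group
        _ = s i' * (p^(c+1) * p) := by rw [← pow_succ']
        _ = s i' * p^(c+2) := by rw [← pow_succ]
      constructor
      · intro h
        have hx : x.1 = p⁻¹ * (s i' * p^c) * p := by rw [← h]; group
        rw [key] at hx; exact hx
      · intro h
        rw [h, ← key]; group
    ext
    · show p ^ n * (p * x.1 * p⁻¹) * (p ^ n)⁻¹ = p ^ (n+1) * x.1 * (p ^ (n+1))⁻¹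
      calc p ^ n * (p * x.1 * p⁻¹) * (p ^ n)⁻¹ = (p^n * p) * x.1 * (p^n * p)⁻¹ := by group
      _ = p^(n+1) * x.1 * (p^(n+1))⁻¹ := by rw [← pow_succ]
    · simp only []
      have hterm : ∀ k : ℕ,
          ((if p * x.1 * p⁻¹ = s i' * p^(2*k) then (1:ZMod 2) else 0) +
           (if p * x.1 * p⁻¹ = s i' * p^(2*k+1) then (1:ZMod 2) else 0))
          = ((if x.1 = s i' * p^(2*(k+1)) then (1:ZMod 2) else 0) +
             (if x.1 = s i' * p^(2*(k+1)+1) then (1:ZMod 2) else 0)) := by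
        intro k
        rw [if_congr (hcond (2*k)) rfl rfl, if_congr (hcond (2*k+1)) rfl rfl,
          show 2*k+2 = 2*(k+1) from by ring, show 2*k+1+2 = 2*(k+1)+1 from by ring]
      rw [Finset.sum_congr rfl (fun k _ => hterm k)]
      rw [Finset.sum_range_succ' (fun k =>
        ((if x.1 = s i' * p^(2*k) then (1:ZMod 2) else 0) +
         (if x.1 = s i' * p^(2*k+1) then (1:ZMod 2) else 0)))]
      ring

lemma eta_liftable : CoxeterMatrix.IsLiftable M (eta cs) := by
  intro i i'
  rcases Nat.eq_zero_or_pos (M i i') with h0 | hpos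
  · rw [h0, pow_zero]
  · apply Equiv.ext
    intro x
    rw [eta_braid cs i i' (M i i') x]
    have hpm : (s i * s i') ^ (M i i') = 1 := cs.simple_mul_simple_pow i i'
    have h3 : ∀ c : ZMod 2, c + c = 0 := by decide
    set p := s i * s i' with hp
    set m := M i i' with hm
    have hsum : ∑ k ∈ Finset.range m,
        ((if x.1 = s i' * p^(2*k) then (1:ZMod 2) else 0) +
         (if x.1 = s i' * p^(2*k+1) then (1:ZMod 2) else 0)) = 0 := by
      rw [sum_pair (fun j => if x.1 = s i' * p^j then (1:ZMod 2) else 0) m]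
      rw [two_mul, Finset.sum_range_add]
      have : ∀ j : ℕ, (if x.1 = s i' * p^(m+j) then (1:ZMod 2) else 0)
          = (if x.1 = s i' * p^j then (1:ZMod 2) else 0) := by
        intro j
        rw [pow_add, hpm, one_mul]
      rw [Finset.sum_congr rfl (fun j _ => this j), ← Finset.sum_add_distrib]
      simp [h3]
    rw [hsum, hpm]
    simp

local prefix:100 "ris" => cs.rightInvSeq
local prefix:100 "ℓ" => cs.length

noncomputable def cnt (u : W) : List W → ZMod 2
  | [] => 0
  | a :: l => (if u = a then 1 else 0) + cnt u l

lemma cnt_cons (u a : W) (l : List W) :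
    cnt u (a :: l) = (if u = a then 1 else 0) + cnt u l := rfl

lemma mem_of_cnt_ne_zero {u : W} {l : List W} (h : cnt u l ≠ 0) : u ∈ l := by
  induction l with
  | nil => simp [cnt] at h
  | cons a l ih =>
    rw [cnt_cons] at h
    by_cases hu : u = a
    · simp [hu]
    · simp only [hu, if_false, zero_add] at h
      exact List.mem_cons_of_mem _ (ih h)

/-- The Tits permutation representation. -/
noncomputable def repn : W →* Equiv.Perm (W × ZMod 2) :=
  cs.lift ⟨eta cs, eta_liftable cs⟩

lemma repn_simple (i : B) : repn cs (s i) = eta cs i :=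
  cs.lift_apply_simple (eta_liftable cs) i

lemma repn_wordProd (ω : List B) (x : W × ZMod 2) :
    repn cs (π ω) x = (π ω * x.1 * (π ω)⁻¹, x.2 + cnt x.1 (ris ω)) := by
  induction ω generalizing x with
  | nil => simp [cnt]
  | cons i ω ih =>
    rw [cs.wordProd_cons, map_mul, Equiv.Perm.mul_apply, ih, repn_simple, eta_apply]
    have hris : ris (i :: ω) = ((π ω)⁻¹ * s i * π ω) :: ris ω := rfl
    have hcond : (π ω * x.1 * (π ω)⁻¹ = s i) ↔ (x.1 = (π ω)⁻¹ * s i * π ω) := by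
      constructor
      · intro h
        rw [← h]; group
      · intro h
        rw [h]; group
    ext
    · show s i * (π ω * x.1 * (π ω)⁻¹) * s i = (s i * π ω) * x.1 * (s i * π ω)⁻¹
      rw [mul_inv_rev, cs.inv_simple]
      group
    · show x.2 + cnt x.1 (ris ω) + (if π ω * x.1 * (π ω)⁻¹ = s i then 1 else 0)
        = x.2 + cnt x.1 (ris (i :: ω))
      rw [hris, cnt_cons, if_congr hcond rfl rfl]
      ring

/-- Parity of the number of occurrences of `u` in the right inversion sequence depends
only on the product of the word. -/
lemma cnt_ris_eq_of_wordProd_eq {ω ω' : List B} (h : π ω = π ω') (u : W) :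
    cnt u (ris ω) = cnt u (ris ω') := by
  have h1 := repn_wordProd cs ω (u, 0)
  have h2 := repn_wordProd cs ω' (u, 0)
  rw [h] at h1
  rw [h1] at h2
  have := congrArg Prod.snd h2
  simpa using this

/-- Strong exchange, in the form we need: if right-multiplying by a simple reflection
decreases length, then it can be achieved by deleting a letter of any word. -/
lemma exchange {ω : List B} {i : B} (h : ℓ (π ω * s i) < ℓ (π ω)) :
    ∃ k < ω.length, π ω * s i = π (ω.eraseIdx k) := by
  have hmem : s i ∈ ris ω := by
    apply mem_of_cnt_ne_zero
    intro hzero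
    -- take a reduced word for π ω * s i
    obtain ⟨τ, hτred, hτ⟩ := cs.exists_reduced_word' (π ω * s i)
    have hprod : π (τ ++ [i]) = π ω := by
      rw [cs.wordProd_append, ← hτ, cs.wordProd_singleton]
      rw [mul_assoc, cs.simple_mul_simple_self, mul_one]
    have hcnt := cnt_ris_eq_of_wordProd_eq cs hprod (s i)
    -- compute cnt (s i) (ris (τ ++ [i]))
    have hconcat : ris (τ ++ [i]) = (List.map (MulAut.conj (s i)) (ris τ)).concat (s i) := by
      rw [← List.concat_eq_append]
      exact cs.rightInvSeq_concat τ i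
    have hc2 : cnt (s i) (ris (τ ++ [i])) = cnt (s i) (ris τ) + 1 := by
      rw [hconcat]
      have hmapcnt : ∀ l : List W, cnt (s i) (List.map (MulAut.conj (s i)) l) = cnt (s i) l := by
        intro l
        induction l with
        | nil => rfl
        | cons a l ih =>
          rw [List.map_cons, cnt_cons, cnt_cons, ih]
          congr 1
          have : (s i = (MulAut.conj (s i)) a) ↔ (s i = a) := by
            rw [MulAut.conj_apply]
            constructor
            · intro h'
              calc s i = (s i)⁻¹ * (s i) * (s i) := by group
              _ = (s i)⁻¹ * (s i * a * (s i)⁻¹) * (s i) := by rw [← h']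
              _ = a := by group
            · intro h'
              rw [← h']
              group
          exact if_congr this rfl rfl
      have hconcats : cnt (s i) ((List.map (MulAut.conj (s i)) (ris τ)).concat (s i))
          = cnt (s i) (List.map (MulAut.conj (s i)) (ris τ)) + 1 := by
        generalize (List.map (MulAut.conj (s i)) (ris τ)) = l
        induction l with
        | nil => simp [List.concat, cnt]
        | cons a l ih => rw [List.concat_cons, cnt_cons, ih, cnt_cons]; ring
      rw [hconcats, hmapcnt]
    rw [hzero, hc2] at hcnt
    have hτcnt : cnt (s i) (ris τ) = 1 := by
      have h01 : ∀ c : ZMod 2, c + 1 = 0 → c = 1 := by decide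
      exact h01 _ hcnt
    have hsmem : s i ∈ ris τ := mem_of_cnt_ne_zero (by rw [hτcnt]; exact one_ne_zero)
    have hinv := cs.isRightInversion_of_mem_rightInvSeq hτred hsmem
    rw [← hτ] at hinv
    have : ℓ (π ω * s i * s i) < ℓ (π ω * s i) := hinv.2
    rw [mul_assoc, cs.simple_mul_simple_self, mul_one] at this
    omega
  obtain ⟨k, hk, hke⟩ := List.mem_iff_getElem.mp hmem
  rw [cs.length_rightInvSeq] at hk
  refine ⟨k, hk, ?_⟩
  rw [← cs.wordProd_mul_getD_rightInvSeq ω k]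
  congr 1
  rw [← hke, List.getD_eq_getElem]

/-- Deletion: a non-reduced word can be shortened by two letters without changing its product,
keeping all letters from the original word. -/
lemma deletion {ω : List B} (h : ¬ cs.IsReduced ω) :
    ∃ ω' : List B, π ω' = π ω ∧ ω'.length + 2 = ω.length ∧ ∀ b ∈ ω', b ∈ ω := by
  -- find a descent along prefixes
  have hlt : ℓ (π ω) < ω.length := lt_of_le_of_ne (cs.length_wordProd_le ω) h
  have hstep : ∃ k, ∃ hk : k < ω.length,
      ℓ (π (ω.take k) * s (ω.get ⟨k, hk⟩)) < ℓ (π (ω.take k)) := by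
    by_contra hcon
    push_neg at hcon
    have hgrow : ∀ k ≤ ω.length, ℓ (π (ω.take k)) = k := by
      intro k
      induction k with
      | zero => intro _; simp
      | succ k ih =>
        intro hk1
        have hk : k < ω.length := by omega
        have htake : ω.take (k+1) = ω.take k ++ [ω.get ⟨k, hk⟩] := by
          rw [← List.take_concat_get hk, List.concat_eq_append]
          rfl
        have hne := hcon k hk
        have h2 : π (ω.take (k+1)) = π (ω.take k) * s (ω.get ⟨k, hk⟩) := by
          rw [htake, cs.wordProd_append, cs.wordProd_singleton]
        rcases cs.length_mul_simple (π (ω.take k)) (ω.get ⟨k, hk⟩) with hc | hc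
        · rw [h2, hc, ih (by omega)]
        · exfalso
          have := ih (le_of_lt hk)
          omega
    have := hgrow ω.length le_rfl
    rw [List.take_length] at this
    omega
  obtain ⟨k, hk, hdesc⟩ := hstep
  obtain ⟨r, hr, hre⟩ := exchange cs hdesc
  rw [List.length_take, min_eq_left (le_of_lt hk)] at hr
  refine ⟨(ω.take k).eraseIdx r ++ ω.drop (k+1), ?_, ?_, ?_⟩
  · rw [cs.wordProd_append, ← hre]
    have : π ω = π (ω.take (k+1)) * π (ω.drop (k+1)) := by
      rw [← cs.wordProd_append, List.take_append_drop]
    rw [this]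
    congr 1
    rw [← List.take_concat_get hk, List.concat_eq_append, cs.wordProd_append,
      cs.wordProd_singleton]
    rfl
  · rw [List.length_append, List.length_eraseIdx, List.length_take,
      min_eq_left (le_of_lt hk), List.length_drop]
    simp only [hr, if_true]
    omega
  · intro b hb
    rcases List.mem_append.mp hb with hb | hb
    · exact List.mem_of_mem_take (List.mem_of_mem_eraseIdx hb)
    · exact List.mem_of_mem_drop hb

lemma exists_word_over {A : Set B} {w : W} (hw : w ∈ Subgroup.closure (cs.simple '' A)) :
    ∃ ω : List B, (∀ b ∈ ω, b ∈ A) ∧ π ω = w := by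
  induction hw using Subgroup.closure_induction with
  | mem x hx =>
    obtain ⟨a, ha, rfl⟩ := hx
    exact ⟨[a], by simpa using ha, cs.wordProd_singleton a⟩
  | one => exact ⟨[], by simp, cs.wordProd_nil⟩
  | mul x y _ _ ihx ihy =>
    obtain ⟨ω₁, h₁, rfl⟩ := ihx
    obtain ⟨ω₂, h₂, rfl⟩ := ihy
    exact ⟨ω₁ ++ ω₂, by
      intro b hb
      rcases List.mem_append.mp hb with hb | hb
      exacts [h₁ b hb, h₂ b hb], cs.wordProd_append ω₁ ω₂⟩
  | inv x _ ihx =>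
    obtain ⟨ω, h₁, rfl⟩ := ihx
    exact ⟨ω.reverse, fun b hb => h₁ b (List.mem_reverse.mp hb), cs.wordProd_reverse ω⟩

lemma exists_reduced_word_over {A : Set B} {w : W} (hw : w ∈ Subgroup.closure (cs.simple '' A)) :
    ∃ ω : List B, (∀ b ∈ ω, b ∈ A) ∧ cs.IsReduced ω ∧ π ω = w := by
  obtain ⟨ω, hA, rfl⟩ := exists_word_over cs hw
  clear hw
  suffices H : ∀ n (ω : List B), ω.length = n → (∀ b ∈ ω, b ∈ A) →
      ∃ τ : List B, (∀ b ∈ τ, b ∈ A) ∧ cs.IsReduced τ ∧ π τ = π ω by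
    exact H ω.length ω rfl hA
  clear hA ω
  intro n
  induction n using Nat.strong_induction_on with
  | _ n ih =>
    intro ω hlen hA
    by_cases hred : cs.IsReduced ω
    · exact ⟨ω, hA, hred, rfl⟩
    · obtain ⟨ω', hprod, hlen', hmem⟩ := deletion cs hred
      obtain ⟨τ, hτA, hτred, hτ⟩ := ih ω'.length (by omega) ω' rfl
        (fun b hb => hA b (hmem b hb))
      exact ⟨τ, hτA, hτred, by rw [hτ, hprod]⟩

/-- The parabolic fact: a simple reflection lying in the standard parabolic subgroup generated
by the simple reflections indexed by `A` must equal one of those simple reflections. -/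
lemma simple_eq_of_mem_closure {A : Set B} {j : B}
    (h : s j ∈ Subgroup.closure (cs.simple '' A)) : ∃ a ∈ A, s a = s j := by
  obtain ⟨ω, hA, hred, hprod⟩ := exists_reduced_word_over cs h
  have hlen : ω.length = 1 := by
    have := hred
    rw [CoxeterSystem.IsReduced, hprod, cs.length_simple] at this
    omega
  obtain ⟨a, rfl⟩ := List.length_eq_one_iff.mp hlen
  refine ⟨a, hA a (by simp), ?_⟩
  rw [← cs.wordProd_singleton a, hprod]

/-- In a Coxeter system whose index set consists of (at most) two elements `x` and `y`,
the simple reflections at `x` and `y` are distinct. -/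
lemma pair_distinct {ι : Type*} (P : Set ι) (x y : ι) (hxy : x ≠ y)
    (hP : ∀ z : P, (z : ι) = x ∨ (z : ι) = y)
    {V : Type*} [Group V] {N : CoxeterMatrix P} (csP : CoxeterSystem N V)
    (hx : x ∈ P) (hy : y ∈ P) :
    csP.simple ⟨x, hx⟩ ≠ csP.simple ⟨y, hy⟩ := by
  set i₁ : P := ⟨x, hx⟩
  set i₂ : P := ⟨y, hy⟩
  have hi12 : i₁ ≠ i₂ := fun h => hxy (congrArg Subtype.val h)
  set m := N i₁ i₂ with hm
  set f : P → DihedralGroup m := fun z => if z = i₁ then .sr 0 else .sr 1 with hf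
  have hr1m : (DihedralGroup.r 1 : DihedralGroup m) ^ m = 1 := by
    rw [DihedralGroup.r_one_pow, ZMod.natCast_self, DihedralGroup.one_def]
  have hfi₁ : f i₁ = DihedralGroup.sr 0 := if_pos rfl
  have hfi₂ : f i₂ = DihedralGroup.sr 1 := if_neg (Ne.symm hi12)
  have hfz : ∀ z : P, f z = DihedralGroup.sr 0 ∨ f z = DihedralGroup.sr 1 := by
    intro z
    by_cases hz1 : z = i₁
    · left; rw [hz1, hfi₁]
    · right; exact if_neg hz1
  have hlift : CoxeterMatrix.IsLiftable N f := by
    intro z z'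
    by_cases hzz : z = z'
    · subst hzz
      rw [N.diagonal z, pow_one]
      rcases hfz z with h | h <;>
        rw [h, DihedralGroup.sr_mul_sr, sub_self, DihedralGroup.one_def]
    · have hcase : (z = i₁ ∧ z' = i₂) ∨ (z = i₂ ∧ z' = i₁) := by
        rcases hP z with h1 | h1 <;> rcases hP z' with h2 | h2
        · exact absurd (Subtype.ext (h1.trans h2.symm)) hzz
        · exact Or.inl ⟨Subtype.ext h1, Subtype.ext h2⟩
        · exact Or.inr ⟨Subtype.ext h1, Subtype.ext h2⟩
        · exact absurd (Subtype.ext (h1.trans h2.symm)) hzz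
      rcases hcase with ⟨h1, h2⟩ | ⟨h1, h2⟩
      · rw [h1, h2, hfi₁, hfi₂, DihedralGroup.sr_mul_sr, ← hm]
        simpa using hr1m
      · have hsymm : N i₂ i₁ = m := (N.symmetric i₁ i₂).symm
        rw [h1, h2, hfi₂, hfi₁, DihedralGroup.sr_mul_sr, hsymm]
        have hinv : (DihedralGroup.r (0 - 1) : DihedralGroup m) = (DihedralGroup.r 1)⁻¹ := by
          rw [eq_inv_iff_mul_eq_one, DihedralGroup.r_mul_r]
          rw [sub_add_cancel, DihedralGroup.one_def]
        rw [hinv, inv_pow, hr1m, inv_one]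
  intro heq
  have := congrArg (csP.lift ⟨f, hlift⟩) heq
  rw [csP.lift_apply_simple hlift, csP.lift_apply_simple hlift] at this
  rw [hfi₁, hfi₂] at this
  have h01 : (0 : ZMod m) = 1 := by
    injection this
  have hm1 : m ≠ 1 := N.off_diagonal i₁ i₂ hi12
  match m, h01, hm1 with
  | 0, h01, _ => exact absurd h01 (by decide)
  | 1, _, hm1 => exact hm1 rfl
  | (k+2), h01, _ =>
    haveI : Fact (1 < k + 2) := ⟨by omega⟩
    have := congrArg ZMod.val h01
    rw [ZMod.val_zero, ZMod.val_one] at this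
    omega

end Stmt19Aux

lemma Stmt19Aux.key {W : Type*} [Group W] {ι : Type*} (s : ι → W)
    (hgen : Subgroup.closure (Set.range s) = ⊤)
    (hcox : ∀ J : Set ι, J ≠ Set.univ →
      ∃ (M : CoxeterMatrix J) (cs : CoxeterSystem M (Subgroup.closure (s '' J))),
        ∀ j : J, (cs.simple j : W) = s (j : ι))
    (J J' : Set ι)
    (heq : Subgroup.closure (s '' J) = Subgroup.closure (s '' J'))
    (hne : Subgroup.closure (s '' J) ≠ ⊤) : J' ⊆ J := by
  intro j hj
  by_contra hjJ
  have hsjH : s j ∈ Subgroup.closure (s '' J) := by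
    rw [heq]
    exact Subgroup.subset_closure (Set.mem_image_of_mem s hj)
  set K : Set ι := insert j J with hKdef
  by_cases hK : K = Set.univ
  · have h1 : Subgroup.closure (s '' K) = ⊤ := by
      rw [hK, Set.image_univ, hgen]
    have h2 : Subgroup.closure (s '' K) ≤ Subgroup.closure (s '' J) := by
      rw [Subgroup.closure_le]
      rintro x ⟨b, hb, rfl⟩
      rcases hb with hb | hb
      · rw [hb]; exact hsjH
      · exact Subgroup.subset_closure (Set.mem_image_of_mem s hb)
    rw [h1] at h2
    exact hne (top_le_iff.mp h2)
  · obtain ⟨Mk, csK, hsimpK⟩ := hcox K hK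
    set Aset : Set ↥K := {k : ↥K | (k : ι) ∈ J} with hAset
    have himg : (Subgroup.closure (s '' K)).subtype '' (csK.simple '' Aset) = s '' J := by
      ext w
      constructor
      · rintro ⟨g, ⟨k, hk, rfl⟩, rfl⟩
        exact ⟨(k : ι), hk, (hsimpK k).symm⟩
      · rintro ⟨b, hb, rfl⟩
        have hbK : b ∈ K := Set.mem_insert_of_mem j hb
        exact ⟨csK.simple ⟨b, hbK⟩, ⟨⟨b, hbK⟩, hb, rfl⟩, hsimpK ⟨b, hbK⟩⟩
    have hmap : Subgroup.map (Subgroup.closure (s '' K)).subtype (Subgroup.closure (csK.simple '' Aset))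
        = Subgroup.closure (s '' J) := by
      rw [MonoidHom.map_closure, himg]
    have hjK : j ∈ K := Set.mem_insert j J
    have hmem : csK.simple ⟨j, hjK⟩ ∈ Subgroup.closure (csK.simple '' Aset) := by
      have : s j ∈ Subgroup.map (Subgroup.closure (s '' K)).subtype (Subgroup.closure (csK.simple '' Aset)) := by
        rw [hmap]; exact hsjH
      obtain ⟨g, hg, hgcoe⟩ := this
      have : g = csK.simple ⟨j, hjK⟩ := by
        apply Subtype.coe_injective
        show (g : W) = (csK.simple ⟨j, hjK⟩ : W)
        rw [hsimpK ⟨j, hjK⟩]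
        exact hgcoe
      rwa [this] at hg
    obtain ⟨a, haA, hsa⟩ := Stmt19Aux.simple_eq_of_mem_closure csK hmem
    have haJ : (a : ι) ∈ J := haA
    have haj : (a : ι) ≠ j := fun h => hjJ (h ▸ haJ)
    have hsaj : s (a : ι) = s j := by
      have h' : (csK.simple a : W) = (csK.simple ⟨j, hjK⟩ : W) := congrArg Subtype.val hsa
      rwa [hsimpK a, hsimpK ⟨j, hjK⟩] at h'
    -- the pair {a, j}
    set P : Set ι := insert (a : ι) {j} with hP
    have hPK : P ⊆ K := by
      intro z hz
      rcases hz with hz | hz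
      · rw [hz]; exact a.2
      · rw [hz]; exact hjK
    have hPuniv : P ≠ Set.univ := by
      intro h
      apply hK
      apply Set.eq_univ_of_univ_subset
      rw [← h]
      exact hPK
    obtain ⟨M₂, cs₂, hsimp₂⟩ := hcox P hPuniv
    have haP : (a : ι) ∈ P := Set.mem_insert _ _
    have hjP : j ∈ P := Set.mem_insert_of_mem _ rfl
    have hclassify : ∀ z : P, (z : ι) = (a : ι) ∨ (z : ι) = j := by
      intro z
      rcases z.2 with h | h
      · exact Or.inl h
      · exact Or.inr h
    apply Stmt19Aux.pair_distinct P (a : ι) j haj hclassify cs₂ haP hjP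
    apply Subtype.coe_injective
    show (cs₂.simple ⟨(a : ι), haP⟩ : W) = (cs₂.simple ⟨j, hjP⟩ : W)
    rw [hsimp₂ ⟨(a : ι), haP⟩, hsimp₂ ⟨j, hjP⟩]
    exact hsaj

theorem stmt19 {W : Type*} [Group W] {ι : Type*} [Finite ι] (s : ι → W)
    (hgen : Subgroup.closure (Set.range s) = ⊤)
    (hcox : ∀ J : Set ι, J ≠ Set.univ →
      ∃ (M : CoxeterMatrix J) (cs : CoxeterSystem M (Subgroup.closure (s '' J))),
        ∀ j : J, (cs.simple j : W) = s (j : ι))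
    (J J' : Set ι) (hJ : J ≠ Set.univ) (hJ' : J' ≠ Set.univ)
    (heq : Subgroup.closure (s '' J) = Subgroup.closure (s '' J'))
    (hne : Subgroup.closure (s '' J) ≠ ⊤) : J = J' := by
  have h1 : J' ⊆ J := Stmt19Aux.key s hgen hcox J J' heq hne
  have hne' : Subgroup.closure (s '' J') ≠ ⊤ := by rw [← heq]; exact hne
  have h2 : J ⊆ J' := Stmt19Aux.key s hgen hcox J' J heq.symm hne'
  exact Set.Subset.antisymm h2 h1
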